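/- Let {x_i}_{i∈I} be a Bessel sequence in a separable Hilbert space H with synthesis operator U_x : ℓ²(I) → H. Then for every L ∈ B(H, ℓ²(I)), the sequence {x_i} is a (U_x L)-frame for H; conversely, if {x_i} is a K-frame for some K ∈ B(H), then K = U_x L for some L ∈ B(H, ℓ²(I)). -/

import Mathlib

noncomputable section

variable {H : Type*} [NormedAddCommGroup H] [InnerProductSpace ℂ H] [CompleteSpace H]
variable {I : Type*} [Countable I] [DecidableEq I]

/-- Bessel sequence in a Hilbert space. -/
def IsBessel (f : I → H) : Prop :=
  ∃ B : ℝ, 0 < B ∧ ∀ x : H, ∑' i, ‖(inner ℂ (f i) x : ℂ)‖ ^ 2 ≤ B * ‖x‖ ^ 2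

/-- θ is the analysis (transform) operator of the sequence f:
(θ x)_i = ⟨x, f_i⟩. -/
def IsAnalysisOf (f : I → H) (θ : H →L[ℂ] lp (fun _ : I => ℂ) 2) : Prop :=
  ∀ (x : H) (i : I), (θ x : ∀ _ : I, ℂ) i = (inner ℂ (f i) x : ℂ)

/-- U is the synthesis (pre-frame) operator of the sequence f, i.e. its adjoint
is the analysis operator of f. -/
def IsSynthesisOf (f : I → H) (U : lp (fun _ : I => ℂ) 2 →L[ℂ] H) : Prop :=
  ∀ (x : H) (i : I), ((ContinuousLinearMap.adjoint U) x : ∀ _ : I, ℂ) i = (inner ℂ (f i) x : ℂ)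

/-- K-frame. -/
def IsKFrame (K : H →L[ℂ] H) (f : I → H) : Prop :=
  ∃ A B : ℝ, 0 < A ∧ A ≤ B ∧ ∀ x : H,
    A * ‖(ContinuousLinearMap.adjoint K) x‖ ^ 2 ≤ ∑' i, ‖(inner ℂ (f i) x : ℂ)‖ ^ 2 ∧
    ∑' i, ‖(inner ℂ (f i) x : ℂ)‖ ^ 2 ≤ B * ‖x‖ ^ 2

/-- y is a K-dual Bessel sequence for f: Kx = ∑ ⟨x, y_i⟩ f_i. -/
def IsKDual (K : H →L[ℂ] H) (f y : I → H) : Prop :=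
  IsBessel y ∧ ∀ x : H, K x = ∑' i, (inner ℂ (y i) x : ℂ) • f i

end

set_option maxHeartbeats 1000000 in
/-- Auxiliary (Douglas factorization): if `A ‖K* x‖² ≤ ‖U* x‖²` for all `x`, then `K`
factors through `U`. -/
theorem stmt17_aux {H : Type*} [NormedAddCommGroup H] [InnerProductSpace ℂ H] [CompleteSpace H]
    {I : Type*} [Countable I] [DecidableEq I]
    (U : lp (fun _ : I => ℂ) 2 →L[ℂ] H)
    (K : H →L[ℂ] H) (A : ℝ) (hA : 0 < A)
    (hAK : ∀ x : H, A * ‖(ContinuousLinearMap.adjoint K) x‖ ^ 2 ≤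
      ‖(ContinuousLinearMap.adjoint U) x‖ ^ 2) :
    ∃ L : H →L[ℂ] lp (fun _ : I => ℂ) 2, K = U.comp L := by
  classical
  set V : H →L[ℂ] lp (fun _ : I => ℂ) 2 := ContinuousLinearMap.adjoint U with hVdef
  set Kd := ContinuousLinearMap.adjoint K with hKd
  have hwd : ∀ x y : H, V x = V y → Kd x = Kd y := by
    intro x y h
    have h2 := hAK (x - y)
    have hV0 : V (x - y) = 0 := by rw [map_sub, h, sub_self]
    rw [hV0, norm_zero] at h2
    have h4 : ‖Kd (x - y)‖ ^ 2 = 0 :=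
      le_antisymm (by nlinarith) (sq_nonneg _)
    have h3 : Kd (x - y) = 0 := norm_eq_zero.mp (pow_eq_zero_iff two_ne_zero |>.mp h4)
    rw [map_sub, sub_eq_zero] at h3
    exact h3
  set p : Submodule ℂ (lp (fun _ : I => ℂ) 2) := LinearMap.range (V : H →ₗ[ℂ] lp (fun _ : I => ℂ) 2) with hp
  have hσ : ∀ y : p, ∃ x : H, V x = (y : lp (fun _ : I => ℂ) 2) := fun y => y.2
  choose σ hσ' using hσ
  let g₀ : p →ₗ[ℂ] H :=
    { toFun := fun y => Kd (σ y)
      map_add' := fun y z => by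
        rw [← map_add]
        exact hwd _ _ (by rw [map_add, hσ' y, hσ' z, hσ' (y + z)]; rfl)
      map_smul' := fun c y => by
        simp only [RingHom.id_apply, ← map_smul]
        exact hwd _ _ (by rw [map_smul, hσ' y, hσ' (c • y)]; rfl) }
  have hgb : ∀ y : p, ‖g₀ y‖ ≤ Real.sqrt A⁻¹ * ‖y‖ := by
    intro y
    show ‖Kd (σ y)‖ ≤ Real.sqrt A⁻¹ * ‖y‖
    have h2 := hAK (σ y)
    rw [hσ' y] at h2
    have hs : Real.sqrt A⁻¹ ^ 2 = A⁻¹ := Real.sq_sqrt (by positivity)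
    have h5 : ‖Kd (σ y)‖ ^ 2 ≤ A⁻¹ * ‖(y : lp (fun _ : I => ℂ) 2)‖ ^ 2 := by
      rw [← mul_le_mul_iff_right₀ hA, ← mul_assoc, mul_inv_cancel₀ hA.ne', one_mul]
      exact h2
    have hny : ‖(y : lp (fun _ : I => ℂ) 2)‖ = ‖y‖ := rfl
    rw [hny] at h5
    nlinarith [norm_nonneg (Kd (σ y)), norm_nonneg y, Real.sqrt_nonneg A⁻¹,
      mul_nonneg (Real.sqrt_nonneg A⁻¹) (norm_nonneg y)]
  let g : p →L[ℂ] H := g₀.mkContinuous (Real.sqrt A⁻¹) hgb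
  set q : Submodule ℂ (lp (fun _ : I => ℂ) 2) := p.topologicalClosure with hq
  haveI : CompleteSpace q := (Submodule.isClosed_topologicalClosure p).completeSpace_coe
  let e : p →L[ℂ] q :=
    { toLinearMap := Submodule.inclusion p.le_topologicalClosure
      cont := by
        apply Continuous.subtype_mk
        exact continuous_subtype_val }
  have hiso : Isometry e := AddMonoidHomClass.isometry_of_norm e (fun y => rfl)
  have hdense : DenseRange e := by
    have : ∀ z : q, (z : lp (fun _ : I => ℂ) 2) ∈ closure (Subtype.val '' Set.range e) := by
      intro z
      have hz : (z : lp (fun _ : I => ℂ) 2) ∈ closure (p : Set (lp (fun _ : I => ℂ) 2)) := by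
        rw [← Submodule.topologicalClosure_coe]; exact z.2
      convert hz using 2
      ext w
      constructor
      · rintro ⟨_, ⟨y, rfl⟩, rfl⟩; exact y.2
      · rintro hw; exact ⟨e ⟨w, hw⟩, ⟨⟨w, hw⟩, rfl⟩, rfl⟩
    exact (Topology.IsInducing.subtypeVal.dense_iff).mpr this
  let G : q →L[ℂ] H := g.extend e
  let M : lp (fun _ : I => ℂ) 2 →L[ℂ] H := G.comp q.orthogonalProjectionOnto
  refine ⟨ContinuousLinearMap.adjoint M, ?_⟩
  have hMV : ∀ x : H, M (V x) = Kd x := by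
    intro x
    have hmemp : V x ∈ p := ⟨x, rfl⟩
    have hmemq : V x ∈ q := p.le_topologicalClosure hmemp
    have hproj : q.orthogonalProjectionOnto (V x) = ⟨V x, hmemq⟩ :=
      Submodule.orthogonalProjectionOnto_mem_subspace_eq_self (⟨V x, hmemq⟩ : q)
    have he : (⟨V x, hmemq⟩ : q) = e ⟨V x, hmemp⟩ := rfl
    have : M (V x) = g ⟨V x, hmemp⟩ := by
      show G (q.orthogonalProjectionOnto (V x)) = _
      rw [hproj, he]
      exact ContinuousLinearMap.extend_eq g hdense hiso.isUniformInducing _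
    rw [this]
    exact hwd _ _ (hσ' ⟨V x, hmemp⟩)
  have hadj : ContinuousLinearMap.adjoint (U.comp (ContinuousLinearMap.adjoint M))
      = ContinuousLinearMap.adjoint K := by
    rw [ContinuousLinearMap.adjoint_comp, ContinuousLinearMap.adjoint_adjoint]
    ext x
    exact hMV x
  have := congrArg ContinuousLinearMap.adjoint hadj
  rwa [ContinuousLinearMap.adjoint_adjoint, ContinuousLinearMap.adjoint_adjoint, eq_comm] at this

set_option maxHeartbeats 1000000 in
theorem stmt17 {H : Type*} [NormedAddCommGroup H] [InnerProductSpace ℂ H] [CompleteSpace H]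
    {I : Type*} [Countable I] [DecidableEq I]
    (f : I → H) (hf : IsBessel f)
    (U : lp (fun _ : I => ℂ) 2 →L[ℂ] H) (hU : IsSynthesisOf f U) :
    (∀ L : H →L[ℂ] lp (fun _ : I => ℂ) 2, IsKFrame (U.comp L) f) ∧
    (∀ K : H →L[ℂ] H, IsKFrame K f → ∃ L : H →L[ℂ] lp (fun _ : I => ℂ) 2, K = U.comp L) := by
  classical
  set V : H →L[ℂ] lp (fun _ : I => ℂ) 2 := ContinuousLinearMap.adjoint U with hVdef
  have key : ∀ x : H, ∑' i, ‖(inner ℂ (f i) x : ℂ)‖ ^ 2 = ‖V x‖ ^ 2 := by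
    intro x
    have hp : (0:ℝ) < (2 : ENNReal).toReal := by norm_num
    have h := lp.norm_rpow_eq_tsum hp (V x)
    rw [show ((2:ENNReal).toReal) = ((2:ℕ):ℝ) by norm_num] at h
    simp only [Real.rpow_natCast] at h
    rw [h]
    exact tsum_congr fun i => by rw [hU x i]
  obtain ⟨B, hB, hBes⟩ := hf
  constructor
  · intro L
    refine ⟨min B (1 / (‖L‖ ^ 2 + 1)), B, ?_, min_le_left _ _, fun x => ⟨?_, hBes x⟩⟩
    · have : (0:ℝ) < 1 / (‖L‖ ^ 2 + 1) := by positivity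
      exact lt_min hB this
    · rw [key x]
      have hadj : ContinuousLinearMap.adjoint (U.comp L) x
          = ContinuousLinearMap.adjoint L (V x) := by
        rw [ContinuousLinearMap.adjoint_comp]; rfl
      rw [hadj]
      have h1 : ‖ContinuousLinearMap.adjoint L (V x)‖ ≤ ‖L‖ * ‖V x‖ := by
        calc ‖ContinuousLinearMap.adjoint L (V x)‖
            ≤ ‖ContinuousLinearMap.adjoint L‖ * ‖V x‖ :=
              (ContinuousLinearMap.adjoint L).le_opNorm (V x)
          _ = ‖L‖ * ‖V x‖ := by rw [ContinuousLinearMap.adjoint.norm_map]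
      have hmin : min B (1 / (‖L‖ ^ 2 + 1)) ≤ 1 / (‖L‖ ^ 2 + 1) := min_le_right _ _
      have hden : (0:ℝ) < ‖L‖ ^ 2 + 1 := by positivity
      have hmin0 : (0:ℝ) < min B (1 / (‖L‖ ^ 2 + 1)) := lt_min hB (by positivity)
      have h2 : ‖ContinuousLinearMap.adjoint L (V x)‖ ^ 2 ≤ ‖L‖ ^ 2 * ‖V x‖ ^ 2 := by
        nlinarith [norm_nonneg (ContinuousLinearMap.adjoint L (V x)), norm_nonneg (V x),
          norm_nonneg L]
      have h3 : min B (1 / (‖L‖ ^ 2 + 1)) * (‖L‖ ^ 2 + 1) ≤ 1 := by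
        rw [← le_div_iff₀ hden]; simp only [one_div] at hmin ⊢; exact hmin
      have h4 : min B (1 / (‖L‖ ^ 2 + 1)) * ‖L‖ ^ 2 ≤ 1 := by nlinarith
      calc min B (1 / (‖L‖ ^ 2 + 1)) * ‖ContinuousLinearMap.adjoint L (V x)‖ ^ 2
          ≤ min B (1 / (‖L‖ ^ 2 + 1)) * (‖L‖ ^ 2 * ‖V x‖ ^ 2) :=
            mul_le_mul_of_nonneg_left h2 hmin0.le
        _ = (min B (1 / (‖L‖ ^ 2 + 1)) * ‖L‖ ^ 2) * ‖V x‖ ^ 2 := by ring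
        _ ≤ 1 * ‖V x‖ ^ 2 := mul_le_mul_of_nonneg_right h4 (sq_nonneg _)
        _ = ‖V x‖ ^ 2 := one_mul _
  · rintro K ⟨A, B', hA, _, hfr⟩
    refine stmt17_aux U K A hA fun x => ?_
    have := (hfr x).1
    rwa [key x] at this
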